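/- arXiv:2405.20763 — 2 statements merged into one kernel-verified Lean document; each statement's English description precedes it below -/
import Mathlib

section
/- Davis–Kahan sin(Θ) theorem (projection-gap corollary): Let A, B ∈ ℝ^{p×p} be symmetric with ‖A − B‖ ≤ μ/4, where the top-m eigenvalues of B are ≥ μ > 0 and the remaining p−m eigenvalues of B are 0. Let P_A and P_B denote the orthogonal projections onto the span of the eigenvectors of A (resp. B) associated with the p−m smallest eigenvalues. Then ‖P_A − P_B‖_F ≤ (4√2 min(m, p−m)/μ) ‖A − B‖. -/
open Matrix

variable {p : ℕ}

lemma col_ortho {W : Matrix (Fin p) (Fin p) ℝ} (hW : Wᵀ * W = 1) (k l : Fin p) :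
    ∑ i, W i k * W i l = if k = l then (1:ℝ) else 0 := by
  have := congrFun (congrFun hW k) l
  simpa [Matrix.mul_apply, Matrix.one_apply, transpose_apply] using this

lemma row_ortho {W : Matrix (Fin p) (Fin p) ℝ} (hW : Wᵀ * W = 1) (i i' : Fin p) :
    ∑ l, W i l * W i' l = if i = i' then (1:ℝ) else 0 := by
  have h2 : W * Wᵀ = 1 := mul_eq_one_comm.mp hW
  have := congrFun (congrFun h2 i) i'
  simpa [Matrix.mul_apply, transpose_apply, Matrix.one_apply] using this

lemma parseval {W : Matrix (Fin p) (Fin p) ℝ} (hW : Wᵀ * W = 1) (w : Fin p → ℝ) :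
    ∑ l, (∑ i, W i l * w i)^2 = ∑ i, (w i)^2 := by
  calc ∑ l, (∑ i, W i l * w i)^2
      = ∑ l, ∑ i, ∑ i', (W i l * w i) * (W i' l * w i') := by
        refine Finset.sum_congr rfl fun l _ => ?_
        rw [sq, Finset.sum_mul_sum]
    _ = ∑ i, ∑ i', (w i * w i') * ∑ l, W i l * W i' l := by
        rw [Finset.sum_comm]
        refine Finset.sum_congr rfl fun i _ => ?_
        rw [Finset.sum_comm]
        refine Finset.sum_congr rfl fun i' _ => ?_
        rw [Finset.mul_sum]
        exact Finset.sum_congr rfl fun l _ => by ring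
    _ = ∑ i, (w i)^2 := by
        refine Finset.sum_congr rfl fun i _ => ?_
        simp [row_ortho hW, mul_ite, Finset.sum_ite_eq, sq]

lemma sum_swap4 (S T : Finset (Fin p)) (h : Fin p → Fin p → Fin p → Fin p → ℝ) :
    ∑ i, ∑ j, ∑ k ∈ S, ∑ l ∈ T, h i j k l = ∑ k ∈ S, ∑ l ∈ T, ∑ i, ∑ j, h i j k l :=
  calc ∑ i, ∑ j, ∑ k ∈ S, ∑ l ∈ T, h i j k l
      = ∑ i, ∑ k ∈ S, ∑ j, ∑ l ∈ T, h i j k l :=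
        Finset.sum_congr rfl fun _ _ => Finset.sum_comm
    _ = ∑ k ∈ S, ∑ i, ∑ j, ∑ l ∈ T, h i j k l := Finset.sum_comm
    _ = ∑ k ∈ S, ∑ i, ∑ l ∈ T, ∑ j, h i j k l :=
        Finset.sum_congr rfl fun _ _ => Finset.sum_congr rfl fun _ _ => Finset.sum_comm
    _ = ∑ k ∈ S, ∑ l ∈ T, ∑ i, ∑ j, h i j k l :=
        Finset.sum_congr rfl fun _ _ => Finset.sum_comm

lemma sum_mul_gram (S T : Finset (Fin p)) (f g : Fin p → Fin p → ℝ) :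
    ∑ i, ∑ j, (∑ k ∈ S, f k i * f k j) * (∑ l ∈ T, g l i * g l j)
      = ∑ k ∈ S, ∑ l ∈ T, (∑ i, f k i * g l i)^2 := by
  calc ∑ i, ∑ j, (∑ k ∈ S, f k i * f k j) * (∑ l ∈ T, g l i * g l j)
      = ∑ i, ∑ j, ∑ k ∈ S, ∑ l ∈ T, (f k i * g l i) * (f k j * g l j) := by
        refine Finset.sum_congr rfl fun i _ => Finset.sum_congr rfl fun j _ => ?_
        rw [Finset.sum_mul_sum]
        exact Finset.sum_congr rfl fun k _ => Finset.sum_congr rfl fun l _ => by ring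
    _ = ∑ k ∈ S, ∑ l ∈ T, ∑ i, ∑ j, (f k i * g l i) * (f k j * g l j) := sum_swap4 _ _ _
    _ = ∑ k ∈ S, ∑ l ∈ T, (∑ i, f k i * g l i)^2 := by
        refine Finset.sum_congr rfl fun k _ => Finset.sum_congr rfl fun l _ => ?_
        rw [sq, Finset.sum_mul_sum]

lemma quad_form (W : Matrix (Fin p) (Fin p) ℝ) (d : Fin p → ℝ) (x y : Fin p → ℝ) :
    ∑ i, x i * ((W * Matrix.diagonal d * Wᵀ).mulVec y) i
      = ∑ l, d l * (∑ i, W i l * x i) * (∑ j, W j l * y j) := by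
  have h1 : (W * Matrix.diagonal d * Wᵀ).mulVec y
      = W.mulVec ((Matrix.diagonal d).mulVec (Wᵀ.mulVec y)) := by
    rw [mulVec_mulVec, mulVec_mulVec]
  rw [h1]
  have h2 : ∑ i, x i * (W.mulVec ((Matrix.diagonal d).mulVec (Wᵀ.mulVec y))) i
      = x ⬝ᵥ (W.mulVec ((Matrix.diagonal d).mulVec (Wᵀ.mulVec y))) := rfl
  rw [h2, dotProduct_mulVec]
  simp only [vecMul, mulVec, dotProduct, Matrix.diagonal_apply, transpose_apply]
  refine Finset.sum_congr rfl fun l _ => ?_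
  simp only [ite_mul, zero_mul, Finset.sum_ite_eq]
  simp only [Finset.mem_univ, if_true]
  have e1 : ∑ i, x i * W i l = ∑ i, W i l * x i :=
    Finset.sum_congr rfl fun i _ => mul_comm _ _
  rw [e1]; ring

lemma mulVec_sq_le (M : Matrix (Fin p) (Fin p) ℝ) (y : Fin p → ℝ) :
    ∑ i, (M.mulVec y i)^2 ≤ ‖toEuclideanCLM (𝕜 := ℝ) M‖^2 * ∑ i, (y i)^2 := by
  set T := toEuclideanCLM (𝕜 := ℝ) M with hT
  set y' : EuclideanSpace ℝ (Fin p) := (WithLp.equiv 2 (Fin p → ℝ)).symm y with hy'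
  have h1 : T y' = (WithLp.equiv 2 (Fin p → ℝ)).symm (M.mulVec y) := by
    rw [hy', hT, WithLp.equiv_symm_apply, toEuclideanCLM_toLp]
  have h2 : ‖T y'‖ ≤ ‖T‖ * ‖y'‖ := T.le_opNorm y'
  have hn : ∀ z : Fin p → ℝ, ‖(WithLp.equiv 2 (Fin p → ℝ)).symm z‖ = Real.sqrt (∑ i, (z i)^2) := by
    intro z
    rw [EuclideanSpace.norm_eq]
    congr 1
    exact Finset.sum_congr rfl fun i _ => by simp [Real.norm_eq_abs, sq_abs]
  rw [h1, hn] at h2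
  rw [hy', hn] at h2
  have hs1 : (0:ℝ) ≤ ∑ i, (M.mulVec y i)^2 := Finset.sum_nonneg fun i _ => sq_nonneg _
  have hs2 : (0:ℝ) ≤ ∑ i, (y i)^2 := Finset.sum_nonneg fun i _ => sq_nonneg _
  calc ∑ i, (M.mulVec y i)^2 = (Real.sqrt (∑ i, (M.mulVec y i)^2))^2 := (Real.sq_sqrt hs1).symm
    _ ≤ (‖T‖ * Real.sqrt (∑ i, (y i)^2))^2 := by
        apply pow_le_pow_left₀ (Real.sqrt_nonneg _) h2
    _ = ‖T‖^2 * ∑ i, (y i)^2 := by rw [mul_pow, Real.sq_sqrt hs2]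

open RealInnerProductSpace in
lemma dot_mulVec_le (M : Matrix (Fin p) (Fin p) ℝ) (y : Fin p → ℝ) :
    ∑ i, y i * M.mulVec y i ≤ ‖toEuclideanCLM (𝕜 := ℝ) M‖ * ∑ i, (y i)^2 := by
  set T := toEuclideanCLM (𝕜 := ℝ) M with hT
  set y' : EuclideanSpace ℝ (Fin p) := (WithLp.equiv 2 (Fin p → ℝ)).symm y with hy'
  have h1 : T y' = (WithLp.equiv 2 (Fin p → ℝ)).symm (M.mulVec y) := by
    rw [hy', hT, WithLp.equiv_symm_apply, toEuclideanCLM_toLp]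
  have h2 : ⟪y', T y'⟫ ≤ ‖y'‖ * ‖T y'‖ := real_inner_le_norm _ _
  have h3 : ⟪y', T y'⟫ = ∑ i, y i * M.mulVec y i := by
    rw [h1, PiLp.inner_apply]
    simp [hy', RCLike.inner_apply]
    exact Finset.sum_congr rfl fun i _ => mul_comm _ _
  have hn : ∀ z : Fin p → ℝ, ‖(WithLp.equiv 2 (Fin p → ℝ)).symm z‖ = Real.sqrt (∑ i, (z i)^2) := by
    intro z
    rw [EuclideanSpace.norm_eq]
    congr 1
    exact Finset.sum_congr rfl fun i _ => by simp [Real.norm_eq_abs, sq_abs]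
  have h4 : ‖T y'‖ ≤ ‖T‖ * ‖y'‖ := T.le_opNorm y'
  have h5 : ‖y'‖ = Real.sqrt (∑ i, (y i)^2) := by rw [hy', hn]
  have hs2 : (0:ℝ) ≤ ∑ i, (y i)^2 := Finset.sum_nonneg fun i _ => sq_nonneg _
  calc ∑ i, y i * M.mulVec y i = ⟪y', T y'⟫ := h3.symm
    _ ≤ ‖y'‖ * ‖T y'‖ := h2
    _ ≤ ‖y'‖ * (‖T‖ * ‖y'‖) := by
        apply mul_le_mul_of_nonneg_left h4 (norm_nonneg _)
    _ = ‖T‖ * (‖y'‖ * ‖y'‖) := by ring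
    _ = ‖T‖ * ∑ i, (y i)^2 := by
        rw [h5, Real.mul_self_sqrt hs2]

lemma exists_ker {m : ℕ} (M : Matrix (Fin m) (Fin (m+1)) ℝ) :
    ∃ a : Fin (m+1) → ℝ, a ≠ 0 ∧ M.mulVec a = 0 := by
  by_contra h
  push_neg at h
  have hinj : Function.Injective M.mulVecLin := by
    rw [← LinearMap.ker_eq_bot, Submodule.eq_bot_iff]
    intro a ha
    by_contra ha0
    exact h a ha0 ha
  have := LinearMap.finrank_le_finrank_of_injective hinj
  simp [Module.finrank_pi] at this

set_option maxHeartbeats 1600000 in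
/-- Davis–Kahan `sin Θ`, projection-gap corollary: Let `A, B` be symmetric
with spectral decompositions `A = U diag(λ) Uᵀ`, `B = V diag(μ) Vᵀ` (columns ordered by
decreasing eigenvalue), where the top `m` eigenvalues of `B` are `≥ μc > 0`, the remaining
`p − m` eigenvalues of `B` vanish, and `‖A − B‖ ≤ μc/4` in spectral norm. Let `P_A, P_B`
be the orthogonal projections onto the eigenspaces of the `p − m` smallest eigenvalues.
Then `‖P_A − P_B‖_F ≤ (4√2 min(m, p−m)/μc) ‖A − B‖`. -/
theorem davis_kahan_projection_gap
    {p m : ℕ} (hmp : m < p)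
    (A B U V : Matrix (Fin p) (Fin p) ℝ)
    (lam mu : Fin p → ℝ)
    (hU : Uᵀ * U = 1) (hV : Vᵀ * V = 1)
    (hAdec : A = U * Matrix.diagonal lam * Uᵀ)
    (hBdec : B = V * Matrix.diagonal mu * Vᵀ)
    (hlam : Antitone lam) (hmu : Antitone mu)
    (μc : ℝ) (hμc : 0 < μc)
    (hmu_top : ∀ k : Fin p, (k : ℕ) < m → μc ≤ mu k)
    (hmu_bot : ∀ k : Fin p, m ≤ (k : ℕ) → mu k = 0)
    (hgap : ‖Matrix.toEuclideanCLM (𝕜 := ℝ) (A - B)‖ ≤ μc / 4) :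
    Real.sqrt (∑ i, ∑ j,
        (((∑ k ∈ Finset.univ.filter (fun k : Fin p => m ≤ (k : ℕ)),
              vecMulVec (fun i => U i k) (fun i => U i k))
          - (∑ k ∈ Finset.univ.filter (fun k : Fin p => m ≤ (k : ℕ)),
              vecMulVec (fun i => V i k) (fun i => V i k))) i j) ^ 2)
      ≤ (4 * Real.sqrt 2 * (min m (p - m)) / μc)
          * ‖Matrix.toEuclideanCLM (𝕜 := ℝ) (A - B)‖ := by
  set E := A - B with hE
  set ε := ‖Matrix.toEuclideanCLM (𝕜 := ℝ) E‖ with hεdef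
  have hε0 : 0 ≤ ε := norm_nonneg _
  set S := Finset.univ.filter (fun k : Fin p => m ≤ (k : ℕ)) with hSdef
  set Sc := Finset.univ.filter (fun k : Fin p => (k : ℕ) < m) with hScdef
  set c : Fin p → Fin p → ℝ := fun k l => ∑ i, U i k * V i l with hcdef
  set d : Fin p → Fin p → ℝ := fun k l => ∑ i, U i k * (E.mulVec (fun j => V j l)) i with hddef
  -- cardinalities
  have hcardS : S.card = p - m := by
    have : S = Finset.Ici (⟨m, hmp⟩ : Fin p) := by
      ext k; simp [hSdef, Fin.le_def]
    rw [this, Fin.card_Ici]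
  have hcardSc : Sc.card = m := by
    have : Sc = Finset.Iio (⟨m, hmp⟩ : Fin p) := by
      ext k; simp [hScdef, Fin.lt_def]
    rw [this, Fin.card_Iio]
  -- symmetry of E
  have hAsym : ∀ i j, A i j = A j i := by
    intro i j
    have : Aᵀ = A := by
      rw [hAdec]
      simp [Matrix.transpose_mul, Matrix.mul_assoc]
    have h := congrFun (congrFun this j) i
    simpa [transpose_apply] using h
  have hBsym : ∀ i j, B i j = B j i := by
    intro i j
    have : Bᵀ = B := by
      rw [hBdec]
      simp [Matrix.transpose_mul, Matrix.mul_assoc]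
    have h := congrFun (congrFun this j) i
    simpa [transpose_apply] using h
  have hEsym : ∀ i j, E i j = E j i := by
    intro i j
    simp [hE, Matrix.sub_apply, hAsym i j, hBsym i j]
  -- d in terms of c
  have hd_eq : ∀ k l, d k l = (lam k - mu l) * c k l := by
    intro k l
    have hA' : ∑ i, U i k * (A.mulVec (fun j => V j l)) i = lam k * c k l := by
      rw [hAdec, quad_form]
      simp only [col_ortho hU]
      rw [Finset.sum_eq_single k]
      · simp [hcdef]
      · intro b _ hb; simp [hb]
      · simp
    have hB' : ∑ i, U i k * (B.mulVec (fun j => V j l)) i = mu l * c k l := by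
      rw [hBdec, quad_form]
      simp only [col_ortho hV]
      rw [Finset.sum_eq_single l]
      · have e : ∑ i, V i l * U i k = c k l :=
          Finset.sum_congr rfl fun i _ => mul_comm _ _
        simp [e]
      · intro b _ hb; simp [hb]
      · simp
    have hsub : d k l = (∑ i, U i k * (A.mulVec (fun j => V j l)) i)
        - ∑ i, U i k * (B.mulVec (fun j => V j l)) i := by
      simp [hddef, hE, Matrix.sub_mulVec, mul_sub, Finset.sum_sub_distrib]
    rw [hsub, hA', hB']; ring
  -- Weyl step
  have hlam_le : ∀ k : Fin p, m ≤ (k : ℕ) → lam k ≤ μc / 4 := by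
    have hm1 : m + 1 ≤ p := hmp
    set emb : Fin (m+1) → Fin p := fun k => ⟨(k:ℕ), lt_of_lt_of_le k.isLt hm1⟩ with hembdef
    set emc : Fin m → Fin p := fun l => ⟨(l:ℕ), lt_trans l.isLt hmp⟩ with hemcdef
    obtain ⟨a, ha0, haM⟩ := exists_ker (m := m)
      (fun l k => ∑ i, U i (emb k) * V i (emc l))
    set x : Fin p → ℝ := fun i => ∑ k : Fin (m+1), a k * U i (emb k) with hxdef
    set s := ∑ k : Fin (m+1), (a k)^2 with hsdef
    have hspos : 0 < s := by
      rcases Function.ne_iff.mp ha0 with ⟨k0, hk0⟩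
      have hk0' : a k0 ≠ 0 := by simpa using hk0
      have h1 : 0 < (a k0)^2 := pow_two_pos_of_ne_zero hk0'
      have h2 : (a k0)^2 ≤ s :=
        Finset.single_le_sum (f := fun k => (a k)^2) (fun k _ => sq_nonneg _)
          (Finset.mem_univ k0)
      linarith
    have ht0 : ∀ k' : Fin p, ∑ i, U i k' * x i
        = ∑ k : Fin (m+1), a k * (if k' = emb k then (1:ℝ) else 0) := by
      intro k'
      simp only [hxdef]
      calc ∑ i, U i k' * ∑ k : Fin (m+1), a k * U i (emb k)
          = ∑ i, ∑ k : Fin (m+1), a k * (U i k' * U i (emb k)) := by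
            refine Finset.sum_congr rfl fun i _ => ?_
            rw [Finset.mul_sum]
            exact Finset.sum_congr rfl fun k _ => by ring
        _ = ∑ k : Fin (m+1), ∑ i, a k * (U i k' * U i (emb k)) := Finset.sum_comm
        _ = ∑ k : Fin (m+1), a k * ∑ i, U i k' * U i (emb k) := by
            refine Finset.sum_congr rfl fun k _ => ?_
            rw [Finset.mul_sum]
        _ = _ := by
            refine Finset.sum_congr rfl fun k _ => ?_
            rw [col_ortho hU]
    have ht1 : ∀ k : Fin (m+1), ∑ i, U i (emb k) * x i = a k := by
      intro k
      rw [ht0]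
      have e : ∀ k2 : Fin (m+1), (emb k = emb k2) = (k = k2) := by
        intro k2
        apply propext
        constructor
        · intro h
          apply Fin.ext
          have := congrArg Fin.val h
          simpa [hembdef] using this
        · intro h; rw [h]
      simp only [e]
      simp [Finset.sum_ite_eq]
    have ht2 : ∀ k' : Fin p, m + 1 ≤ (k' : ℕ) → ∑ i, U i k' * x i = 0 := by
      intro k' hk'
      rw [ht0]
      refine Finset.sum_eq_zero fun k _ => ?_
      have : k' ≠ emb k := by
        intro h
        have := congrArg Fin.val h
        simp [hembdef] at this
        omega
      simp [this]
    have hxx : ∑ i, (x i)^2 = s := by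
      calc ∑ i, (x i)^2 = ∑ i, (∑ k : Fin (m+1), a k * U i (emb k)) * x i := by
            refine Finset.sum_congr rfl fun i _ => ?_
            rw [sq]
        _ = ∑ k : Fin (m+1), ∑ i, a k * (U i (emb k) * x i) := by
            rw [← Finset.sum_comm]
            refine Finset.sum_congr rfl fun i _ => ?_
            rw [Finset.sum_mul]
            exact Finset.sum_congr rfl fun k _ => by ring
        _ = ∑ k : Fin (m+1), a k * a k := by
            refine Finset.sum_congr rfl fun k _ => ?_
            rw [← Finset.mul_sum, ht1 k]
        _ = s := by
            rw [hsdef]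
            exact Finset.sum_congr rfl fun k _ => (sq (a k)).symm ▸ (sq (a k) ▸ rfl)
    have hxBx : ∑ i, x i * (B.mulVec x) i = 0 := by
      rw [hBdec, quad_form]
      refine Finset.sum_eq_zero fun l _ => ?_
      by_cases hl : m ≤ (l : ℕ)
      · rw [hmu_bot l hl]; ring
      · push_neg at hl
        have hvx : ∑ i, V i l * x i = 0 := by
          have hMa := congrFun haM ⟨(l:ℕ), hl⟩
          simp only [Matrix.mulVec, dotProduct, Pi.zero_apply] at hMa
          calc ∑ i, V i l * x i
              = ∑ k : Fin (m+1), ∑ i, a k * (V i l * U i (emb k)) := by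
                simp only [hxdef]
                rw [← Finset.sum_comm]
                refine Finset.sum_congr rfl fun i _ => ?_
                rw [Finset.mul_sum]
                exact Finset.sum_congr rfl fun k _ => by ring
            _ = ∑ k : Fin (m+1), (∑ i, U i (emb k) * V i (emc ⟨(l:ℕ), hl⟩)) * a k := by
                refine Finset.sum_congr rfl fun k _ => ?_
                have he : emc ⟨(l:ℕ), hl⟩ = l := Fin.ext rfl
                rw [he, ← Finset.mul_sum]
                rw [show (∑ i, V i l * U i (emb k)) = ∑ i, U i (emb k) * V i l from
                  Finset.sum_congr rfl fun i _ => mul_comm _ _]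
                ring
            _ = 0 := hMa
        rw [hvx]; ring
    have hweyl : lam ⟨m, hmp⟩ ≤ μc / 4 := by
      have hxAx : lam ⟨m, hmp⟩ * s ≤ ∑ i, x i * (A.mulVec x) i := by
        rw [hAdec, quad_form]
        have hpt : ∀ k' : Fin p,
            lam ⟨m, hmp⟩ * (∑ i, U i k' * x i)^2
              ≤ lam k' * (∑ i, U i k' * x i) * (∑ j, U j k' * x j) := by
          intro k'
          by_cases hk' : (k' : ℕ) ≤ m
          · have hle : lam ⟨m, hmp⟩ ≤ lam k' := hlam (by simpa [Fin.le_def] using hk')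
            have h0 : (0:ℝ) ≤ (∑ i, U i k' * x i)^2 := sq_nonneg _
            calc lam ⟨m, hmp⟩ * (∑ i, U i k' * x i)^2
                ≤ lam k' * (∑ i, U i k' * x i)^2 := mul_le_mul_of_nonneg_right hle h0
              _ = lam k' * (∑ i, U i k' * x i) * (∑ j, U j k' * x j) := by rw [sq]; ring
          · push_neg at hk'
            rw [ht2 k' hk']
            simp
        calc lam ⟨m, hmp⟩ * s
            = lam ⟨m, hmp⟩ * ∑ k', (∑ i, U i k' * x i)^2 := by
              rw [parseval hU x, hxx]
          _ = ∑ k', lam ⟨m, hmp⟩ * (∑ i, U i k' * x i)^2 := Finset.mul_sum _ _ _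
          _ ≤ ∑ k', lam k' * (∑ i, U i k' * x i) * (∑ j, U j k' * x j) :=
              Finset.sum_le_sum fun k' _ => hpt k'
      have hsplitE : ∑ i, x i * (E.mulVec x) i
          = (∑ i, x i * (A.mulVec x) i) - ∑ i, x i * (B.mulVec x) i := by
        simp [hE, Matrix.sub_mulVec, mul_sub, Finset.sum_sub_distrib]
      have hxEx : ∑ i, x i * (E.mulVec x) i ≤ ε * s := by
        have := dot_mulVec_le E x
        rw [hxx] at this
        exact this
      have hfin : lam ⟨m, hmp⟩ * s ≤ (μc/4) * s := by
        have hεs : ε * s ≤ (μc/4) * s :=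
          mul_le_mul_of_nonneg_right hgap hspos.le
        linarith [hxAx, hsplitE, hxEx, hxBx, hεs]
      exact le_of_mul_le_mul_right (by linarith [hfin]) hspos
    intro k hk
    exact le_trans (hlam (show (⟨m, hmp⟩ : Fin p) ≤ k by simpa [Fin.le_def] using hk)) hweyl
  -- column and row bounds on d
  have hd_col : ∀ l : Fin p, ∑ k, (d k l)^2 ≤ ε^2 := by
    intro l
    have h1 : ∑ k, (d k l)^2 = ∑ i, ((E.mulVec (fun j => V j l)) i)^2 := by
      simp only [hddef]
      exact parseval hU _
    rw [h1]
    have h2 := mulVec_sq_le E (fun j => V j l)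
    have h3 : ∑ i, ((fun j => V j l) i)^2 = 1 := by
      have hc := col_ortho hV l l
      simp only [if_pos rfl] at hc
      simpa [sq] using hc
    rw [h3, mul_one] at h2
    exact h2
  have hd_row : ∀ k : Fin p, ∑ l, (d k l)^2 ≤ ε^2 := by
    intro k
    have halt : ∀ l, d k l = ∑ j, V j l * (E.mulVec (fun i => U i k)) j := by
      intro l
      simp only [hddef, mulVec, dotProduct]
      calc ∑ i, U i k * ∑ j, E i j * V j l
          = ∑ i, ∑ j, U i k * (E i j * V j l) := by
            exact Finset.sum_congr rfl fun i _ => Finset.mul_sum _ _ _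
        _ = ∑ j, ∑ i, U i k * (E i j * V j l) := Finset.sum_comm
        _ = ∑ j, V j l * ∑ i, E j i * U i k := by
            refine Finset.sum_congr rfl fun j _ => ?_
            rw [Finset.mul_sum]
            refine Finset.sum_congr rfl fun i _ => ?_
            rw [← hEsym i j]; ring
    have h1 : ∑ l, (d k l)^2 = ∑ j, ((E.mulVec (fun i => U i k)) j)^2 := by
      calc ∑ l, (d k l)^2
          = ∑ l, (∑ j, V j l * (E.mulVec (fun i => U i k)) j)^2 :=
            Finset.sum_congr rfl fun l _ => by rw [halt l]
        _ = _ := parseval hV _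
    rw [h1]
    have h2 := mulVec_sq_le E (fun i => U i k)
    have h3 : ∑ i, ((fun i => U i k) i)^2 = 1 := by
      have hc := col_ortho hU k k
      simp only [if_pos rfl] at hc
      simpa [sq] using hc
    rw [h3, mul_one] at h2
    exact h2
  -- min bound on sum of d²
  have hsum_d : ∑ k ∈ S, ∑ l ∈ Sc, (d k l)^2 ≤ (min m (p - m) : ℕ) * ε^2 := by
    have hb2 : ∑ k ∈ S, ∑ l ∈ Sc, (d k l)^2 ≤ ((p - m : ℕ) : ℝ) * ε^2 := by
      calc ∑ k ∈ S, ∑ l ∈ Sc, (d k l)^2 ≤ ∑ _k ∈ S, ε^2 := by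
            refine Finset.sum_le_sum fun k _ => ?_
            calc ∑ l ∈ Sc, (d k l)^2 ≤ ∑ l, (d k l)^2 :=
                  Finset.sum_le_sum_of_subset_of_nonneg (Finset.subset_univ _)
                    (fun l _ _ => sq_nonneg _)
              _ ≤ ε^2 := hd_row k
        _ = (S.card : ℝ) * ε^2 := by rw [Finset.sum_const, nsmul_eq_mul]
        _ = ((p - m : ℕ) : ℝ) * ε^2 := by rw [hcardS]
    have hb1 : ∑ k ∈ S, ∑ l ∈ Sc, (d k l)^2 ≤ (m : ℝ) * ε^2 := by
      rw [Finset.sum_comm]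
      calc ∑ l ∈ Sc, ∑ k ∈ S, (d k l)^2 ≤ ∑ _l ∈ Sc, ε^2 := by
            refine Finset.sum_le_sum fun l _ => ?_
            calc ∑ k ∈ S, (d k l)^2 ≤ ∑ k, (d k l)^2 :=
                  Finset.sum_le_sum_of_subset_of_nonneg (Finset.subset_univ _)
                    (fun k _ _ => sq_nonneg _)
              _ ≤ ε^2 := hd_col l
        _ = (Sc.card : ℝ) * ε^2 := by rw [Finset.sum_const, nsmul_eq_mul]
        _ = (m : ℝ) * ε^2 := by rw [hcardSc]
    rcases le_total m (p - m) with h | h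
    · rw [min_eq_left h]; exact_mod_cast hb1
    · rw [min_eq_right h]; exact_mod_cast hb2
  -- c bounded by d
  have hc_le : ∀ k ∈ S, ∀ l ∈ Sc, (3/4*μc)^2 * (c k l)^2 ≤ (d k l)^2 := by
    intro k hk l hl
    have hk' : m ≤ (k : ℕ) := by simpa [hSdef] using hk
    have hl' : (l : ℕ) < m := by simpa [hScdef] using hl
    have h1 : lam k ≤ μc / 4 := hlam_le k hk'
    have h2 : μc ≤ mu l := hmu_top l hl'
    have h3 : d k l = (lam k - mu l) * c k l := hd_eq k l
    have ht : lam k - mu l + 3/4*μc ≤ 0 := by linarith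
    have hprod : (3/4*μc)^2 ≤ (lam k - mu l)^2 := by
      nlinarith [mul_nonneg (neg_nonneg.mpr ht) hμc.le, sq_nonneg (lam k - mu l + 3/4*μc)]
    rw [h3]
    nlinarith [mul_le_mul_of_nonneg_right hprod (sq_nonneg (c k l))]
  -- key identity
  have hkey : ∑ i, ∑ j,
        (((∑ k ∈ S, vecMulVec (fun i => U i k) (fun i => U i k))
          - (∑ k ∈ S, vecMulVec (fun i => V i k) (fun i => V i k))) i j) ^ 2
      = 2 * ∑ k ∈ S, ∑ l ∈ Sc, (c k l)^2 := by
    have hentry : ∀ i j : Fin p,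
        (((∑ k ∈ S, vecMulVec (fun i => U i k) (fun i => U i k))
          - (∑ k ∈ S, vecMulVec (fun i => V i k) (fun i => V i k))) i j)
        = (∑ k ∈ S, U i k * U j k) - (∑ k ∈ S, V i k * V j k) := by
      intro i j
      simp [Matrix.sub_apply, Matrix.sum_apply, vecMulVec_apply]
    have hite : ∀ (P : Prop) [Decidable P], ((if P then (1:ℝ) else 0))^2 = if P then (1:ℝ) else 0 := by
      intro P _; split <;> norm_num
    have hUU : ∑ i, ∑ j, (∑ k ∈ S, U i k * U j k) * (∑ k' ∈ S, U i k' * U j k')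
        = (S.card : ℝ) := by
      rw [sum_mul_gram S S (fun k i => U i k) (fun k i => U i k)]
      have : ∀ k ∈ S, ∑ k' ∈ S, (∑ i, U i k * U i k')^2 = 1 := by
        intro k hk
        have e : ∀ k' ∈ S, (∑ i, U i k * U i k')^2 = if k = k' then (1:ℝ) else 0 := by
          intro k' _
          rw [col_ortho hU, hite]
        rw [Finset.sum_congr rfl e, Finset.sum_ite_eq S k (fun _ => (1:ℝ)), if_pos hk]
      rw [Finset.sum_congr rfl this, Finset.sum_const, nsmul_eq_mul, mul_one]
    have hVV : ∑ i, ∑ j, (∑ k ∈ S, V i k * V j k) * (∑ k' ∈ S, V i k' * V j k')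
        = (S.card : ℝ) := by
      rw [sum_mul_gram S S (fun k i => V i k) (fun k i => V i k)]
      have : ∀ k ∈ S, ∑ k' ∈ S, (∑ i, V i k * V i k')^2 = 1 := by
        intro k hk
        have e : ∀ k' ∈ S, (∑ i, V i k * V i k')^2 = if k = k' then (1:ℝ) else 0 := by
          intro k' _
          rw [col_ortho hV, hite]
        rw [Finset.sum_congr rfl e, Finset.sum_ite_eq S k (fun _ => (1:ℝ)), if_pos hk]
      rw [Finset.sum_congr rfl this, Finset.sum_const, nsmul_eq_mul, mul_one]
    have hUV : ∑ i, ∑ j, (∑ k ∈ S, U i k * U j k) * (∑ l ∈ S, V i l * V j l)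
        = ∑ k ∈ S, ∑ l ∈ S, (c k l)^2 := by
      rw [sum_mul_gram S S (fun k i => U i k) (fun l i => V i l)]
    have hone : ∀ k : Fin p, ∑ l, (c k l)^2 = 1 := by
      intro k
      calc ∑ l, (c k l)^2 = ∑ l, (∑ i, V i l * U i k)^2 := by
            refine Finset.sum_congr rfl fun l _ => ?_
            simp only [hcdef]
            rw [show (∑ i, U i k * V i l) = ∑ i, V i l * U i k from
              Finset.sum_congr rfl fun i _ => mul_comm _ _]
        _ = ∑ i, (U i k)^2 := parseval hV _
        _ = 1 := by
            have hc := col_ortho hU k k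
            simp only [if_pos rfl] at hc
            simpa [sq] using hc
    have hSc_eq : Sc = Finset.univ.filter (fun l : Fin p => ¬ m ≤ (l : ℕ)) := by
      ext l; simp only [hScdef, Finset.mem_filter, Finset.mem_univ, true_and]; omega
    have hsplit : ∀ k : Fin p, ∑ l ∈ S, (c k l)^2 + ∑ l ∈ Sc, (c k l)^2 = 1 := by
      intro k
      rw [hSc_eq, hSdef, Finset.sum_filter_add_sum_filter_not]
      exact hone k
    have hSS : ∑ k ∈ S, ∑ l ∈ S, (c k l)^2
        = (S.card : ℝ) - ∑ k ∈ S, ∑ l ∈ Sc, (c k l)^2 := by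
      have e : ∀ k ∈ S, ∑ l ∈ S, (c k l)^2 = 1 - ∑ l ∈ Sc, (c k l)^2 := by
        intro k _
        have := hsplit k
        linarith
      rw [Finset.sum_congr rfl e, Finset.sum_sub_distrib, Finset.sum_const, nsmul_eq_mul,
        mul_one]
    calc ∑ i, ∑ j,
        (((∑ k ∈ S, vecMulVec (fun i => U i k) (fun i => U i k))
          - (∑ k ∈ S, vecMulVec (fun i => V i k) (fun i => V i k))) i j) ^ 2
        = ∑ i, ∑ j, (((∑ k ∈ S, U i k * U j k) * (∑ k' ∈ S, U i k' * U j k'))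
            - 2 * ((∑ k ∈ S, U i k * U j k) * (∑ l ∈ S, V i l * V j l))
            + ((∑ k ∈ S, V i k * V j k) * (∑ k' ∈ S, V i k' * V j k'))) := by
          refine Finset.sum_congr rfl fun i _ => Finset.sum_congr rfl fun j _ => ?_
          rw [hentry i j]; ring
      _ = (S.card : ℝ) - 2 * (∑ k ∈ S, ∑ l ∈ S, (c k l)^2) + (S.card : ℝ) := by
          simp only [Finset.sum_add_distrib, Finset.sum_sub_distrib, ← Finset.mul_sum]
          rw [hUU, hVV, hUV]
      _ = 2 * ∑ k ∈ S, ∑ l ∈ Sc, (c k l)^2 := by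
          rw [hSS]; ring
  -- final assembly
  rw [hkey]
  have hCc0 : 0 ≤ ∑ k ∈ S, ∑ l ∈ Sc, (c k l)^2 :=
    Finset.sum_nonneg fun k _ => Finset.sum_nonneg fun l _ => sq_nonneg _
  have h1 : (3/4*μc)^2 * ∑ k ∈ S, ∑ l ∈ Sc, (c k l)^2 ≤ ∑ k ∈ S, ∑ l ∈ Sc, (d k l)^2 := by
    rw [Finset.mul_sum]
    refine Finset.sum_le_sum fun k hk => ?_
    rw [Finset.mul_sum]
    exact Finset.sum_le_sum fun l hl => hc_le k hk l hl
  set N := min m (p - m) with hN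
  have hNN : ((N:ℕ):ℝ) ≤ ((N:ℕ):ℝ)^2 := by
    rcases Nat.eq_zero_or_pos N with h | h
    · simp [h]
    · have h1 : (1:ℝ) ≤ ((N:ℕ):ℝ) := by exact_mod_cast h
      nlinarith
  have hR0 : 0 ≤ 4 * Real.sqrt 2 * ((N:ℕ):ℝ) / μc * ε := by positivity
  have hs2 : Real.sqrt 2 ^ 2 = 2 := Real.sq_sqrt (by norm_num)
  have hsq : 2 * ∑ k ∈ S, ∑ l ∈ Sc, (c k l)^2
      ≤ (4 * Real.sqrt 2 * ((N:ℕ):ℝ) / μc * ε)^2 := by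
    have h2 : ∑ k ∈ S, ∑ l ∈ Sc, (d k l)^2 ≤ ((N:ℕ):ℝ) * ε^2 := hsum_d
    have hpos : (0:ℝ) < (3/4*μc)^2 := by positivity
    have h3 : ∑ k ∈ S, ∑ l ∈ Sc, (c k l)^2 ≤ (((N:ℕ):ℝ) * ε^2) / (3/4*μc)^2 := by
      rw [le_div_iff₀ hpos]
      calc (∑ k ∈ S, ∑ l ∈ Sc, (c k l)^2) * (3/4*μc)^2
          = (3/4*μc)^2 * ∑ k ∈ S, ∑ l ∈ Sc, (c k l)^2 := mul_comm _ _
        _ ≤ ∑ k ∈ S, ∑ l ∈ Sc, (d k l)^2 := h1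
        _ ≤ ((N:ℕ):ℝ) * ε^2 := h2
    have h4 : (((N:ℕ):ℝ) * ε^2) / (3/4*μc)^2 = (16/9) * ((N:ℕ):ℝ) * ε^2 / μc^2 := by
      field_simp; ring
    have h5 : 2 * ((16/9) * ((N:ℕ):ℝ) * ε^2 / μc^2) ≤ 32 * ((N:ℕ):ℝ)^2 * ε^2 / μc^2 := by
      have hnum : 2 * ((16/9) * ((N:ℕ):ℝ) * ε^2) ≤ 32 * ((N:ℕ):ℝ)^2 * ε^2 := by
        nlinarith [mul_le_mul_of_nonneg_right hNN (sq_nonneg ε)]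
      calc 2 * ((16/9) * ((N:ℕ):ℝ) * ε^2 / μc^2)
          = (2 * ((16/9) * ((N:ℕ):ℝ) * ε^2)) / μc^2 := by ring
        _ ≤ (32 * ((N:ℕ):ℝ)^2 * ε^2) / μc^2 :=
            (div_le_div_iff_of_pos_right (by positivity)).mpr hnum
        _ = 32 * ((N:ℕ):ℝ)^2 * ε^2 / μc^2 := by ring
    have h6 : (4 * Real.sqrt 2 * ((N:ℕ):ℝ) / μc * ε)^2
        = 32 * ((N:ℕ):ℝ)^2 * ε^2 / μc^2 := by
      rw [mul_pow, div_pow, mul_pow, mul_pow, hs2]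
      ring
    calc 2 * ∑ k ∈ S, ∑ l ∈ Sc, (c k l)^2
        ≤ 2 * ((16/9) * ((N:ℕ):ℝ) * ε^2 / μc^2) := by rw [← h4]; linarith
      _ ≤ 32 * ((N:ℕ):ℝ)^2 * ε^2 / μc^2 := h5
      _ = (4 * Real.sqrt 2 * ((N:ℕ):ℝ) / μc * ε)^2 := h6.symm
  calc Real.sqrt (2 * ∑ k ∈ S, ∑ l ∈ Sc, (c k l)^2)
      ≤ Real.sqrt ((4 * Real.sqrt 2 * ((N:ℕ):ℝ) / μc * ε)^2) := Real.sqrt_le_sqrt hsq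
    _ = 4 * Real.sqrt 2 * ((N:ℕ):ℝ) / μc * ε := Real.sqrt_sq hR0
end

section
/- Let L be β-smooth, μ-PL (‖∇L‖² ≥ 2μ L, with min L = 0), and consider the SAM-type bound: for θ⁺ = θ − η∇L(θ + ρv) with ‖v‖ = 1 and η ≤ 1/(4β), one has E-free deterministic bound L(θ⁺) ≤ L(θ) − (3η/4)‖∇L(θ)‖² + ηρ‖∇²L(θ)∇L(θ)‖ + (ηρ²β₃/2)‖∇L(θ)‖ + η²β(‖∇L(θ)‖² + ρ²β²), assuming ‖∇²L‖ ≤ β and the Hessian is β₃-Lipschitz on the relevant region. -/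
open InnerProductSpace intervalIntegral

set_option linter.unusedSectionVars false
set_option linter.unusedVariables false
set_option maxHeartbeats 1000000

section Aux

variable {F : Type*} [NormedAddCommGroup F] [InnerProductSpace ℝ F] [CompleteSpace F]

lemma aux_grad_contDiff (L : F → ℝ) (hL : ContDiff ℝ 2 L) : ContDiff ℝ 1 (gradient L) := by
  have h1 : ContDiff ℝ 1 (fderiv ℝ L) := hL.fderiv_right (by norm_num)
  have : gradient L = (toDual ℝ F).symm ∘ (fderiv ℝ L) := rfl
  rw [this]
  exact ((toDual ℝ F).symm.toContinuousLinearEquiv.contDiff).comp h1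

lemma aux_hasFDerivAt_L (L : F → ℝ) (hL : ContDiff ℝ 2 L) (x : F) :
    HasFDerivAt L (toDual ℝ F (gradient L x)) x :=
  ((hL.differentiable (by norm_num) x).hasGradientAt).hasFDerivAt

lemma aux_line (θ d : F) (t : ℝ) : HasDerivAt (fun s : ℝ => θ + s • d) d t := by
  simpa using ((hasDerivAt_id t).smul_const d).const_add θ

lemma aux_lineL (L : F → ℝ) (hL : ContDiff ℝ 2 L) (θ d : F) (t : ℝ) :
    HasDerivAt (fun s : ℝ => L (θ + s • d)) (⟪gradient L (θ + t • d), d⟫_ℝ) t := by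
  have h := (aux_hasFDerivAt_L L hL (θ + t • d)).comp_hasDerivAt t (aux_line θ d t)
  simpa only [Function.comp_def, toDual_apply_apply] using h

lemma aux_lineG (L : F → ℝ) (hL : ContDiff ℝ 2 L) (θ d : F) (t : ℝ) :
    HasDerivAt (fun s : ℝ => gradient L (θ + s • d))
      (fderiv ℝ (gradient L) (θ + t • d) d) t := by
  have hg : DifferentiableAt ℝ (gradient L) (θ + t • d) :=
    (aux_grad_contDiff L hL).differentiable one_ne_zero _
  exact (hg.hasFDerivAt).comp_hasDerivAt t (aux_line θ d t)

lemma aux_lip (L : F → ℝ) (hL : ContDiff ℝ 2 L) (β : ℝ)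
    (hHess : ∀ x, ‖fderiv ℝ (gradient L) x‖ ≤ β) (x y : F) :
    ‖gradient L x - gradient L y‖ ≤ β * ‖x - y‖ := by
  exact convex_univ.norm_image_sub_le_of_norm_fderiv_le
    (fun z _ => (aux_grad_contDiff L hL).differentiable one_ne_zero z)
    (fun z _ => hHess z) trivial trivial

lemma aux_descent (L : F → ℝ) (hL : ContDiff ℝ 2 L) (β : ℝ) (hβ : 0 < β)
    (hHess : ∀ x, ‖fderiv ℝ (gradient L) x‖ ≤ β) (θ d : F) :
    L (θ + d) ≤ L θ + ⟪gradient L θ, d⟫_ℝ + β / 2 * ‖d‖ ^ 2 := by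
  have hgc : Continuous (gradient L) := (aux_grad_contDiff L hL).continuous
  have hcont : Continuous fun t : ℝ => ⟪gradient L (θ + t • d), d⟫_ℝ := by
    exact (hgc.comp (by continuity)).inner continuous_const
  have heq : ∫ t in (0:ℝ)..1, ⟪gradient L (θ + t • d), d⟫_ℝ = L (θ + d) - L θ := by
    have := integral_eq_sub_of_hasDerivAt (f := fun s : ℝ => L (θ + s • d))
      (f' := fun t => ⟪gradient L (θ + t • d), d⟫_ℝ)
      (fun t _ => aux_lineL L hL θ d t) (hcont.intervalIntegrable 0 1)
    simpa using this
  have hbound : ∀ t ∈ Set.Icc (0:ℝ) 1,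
      ⟪gradient L (θ + t • d), d⟫_ℝ ≤ ⟪gradient L θ, d⟫_ℝ + β * t * ‖d‖ ^ 2 := by
    intro t ht
    have h1 : ⟪gradient L (θ + t • d) - gradient L θ, d⟫_ℝ ≤ β * t * ‖d‖ ^ 2 := by
      calc ⟪gradient L (θ + t • d) - gradient L θ, d⟫_ℝ
          ≤ ‖gradient L (θ + t • d) - gradient L θ‖ * ‖d‖ := real_inner_le_norm _ _
        _ ≤ (β * ‖(θ + t • d) - θ‖) * ‖d‖ := by
            gcongr; exact aux_lip L hL β hHess _ _
        _ = β * t * ‖d‖ ^ 2 := by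
            simp [norm_smul, abs_of_nonneg ht.1]; ring
    have := inner_sub_left (𝕜 := ℝ) (gradient L (θ + t • d)) (gradient L θ) d
    linarith [h1, this.symm.le, this.le]
  have hint : ∫ t in (0:ℝ)..1, ⟪gradient L (θ + t • d), d⟫_ℝ
      ≤ ∫ t in (0:ℝ)..1, (⟪gradient L θ, d⟫_ℝ + β * t * ‖d‖ ^ 2) := by
    apply intervalIntegral.integral_mono_on (by norm_num)
      (hcont.intervalIntegrable 0 1) (by apply Continuous.intervalIntegrable; continuity)
    exact hbound
  have hval : ∫ t in (0:ℝ)..1, (⟪gradient L θ, d⟫_ℝ + β * t * ‖d‖ ^ 2)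
      = ⟪gradient L θ, d⟫_ℝ + β / 2 * ‖d‖ ^ 2 := by
    rw [intervalIntegral.integral_add intervalIntegrable_const
      (by apply Continuous.intervalIntegrable; continuity)]
    simp only [intervalIntegral.integral_const]
    have : ∫ t in (0:ℝ)..1, β * t * ‖d‖ ^ 2 = β * ‖d‖ ^ 2 * ∫ t in (0:ℝ)..1, t := by
      rw [← intervalIntegral.integral_const_mul]; congr 1; ext t; ring
    rw [this, integral_id]; norm_num; ring
  linarith [heq ▸ hint, hval ▸ hint]

lemma aux_taylor (L : F → ℝ) (hL : ContDiff ℝ 2 L) (β₃ : ℝ) (hβ₃ : 0 < β₃)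
    (hHessLip : ∀ x y, ‖fderiv ℝ (gradient L) x - fderiv ℝ (gradient L) y‖ ≤ β₃ * ‖x - y‖)
    (θ d : F) :
    ‖gradient L (θ + d) - gradient L θ - fderiv ℝ (gradient L) θ d‖ ≤ β₃ / 2 * ‖d‖ ^ 2 := by
  have hHc : Continuous (fderiv ℝ (gradient L)) :=
    (aux_grad_contDiff L hL).continuous_fderiv one_ne_zero
  have hcont : Continuous fun t : ℝ =>
      fderiv ℝ (gradient L) (θ + t • d) d - fderiv ℝ (gradient L) θ d := by
    apply Continuous.sub _ continuous_const
    exact (hHc.comp (by continuity)).clm_apply continuous_const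
  have hderiv : ∀ t ∈ Set.uIcc (0:ℝ) 1,
      HasDerivAt (fun s : ℝ => gradient L (θ + s • d) - s • (fderiv ℝ (gradient L) θ d))
        (fderiv ℝ (gradient L) (θ + t • d) d - fderiv ℝ (gradient L) θ d) t := by
    intro t _
    have h2 : HasDerivAt (fun s : ℝ => s • (fderiv ℝ (gradient L) θ d))
        (fderiv ℝ (gradient L) θ d) t := by
      simpa using (hasDerivAt_id t).smul_const (fderiv ℝ (gradient L) θ d)
    exact (aux_lineG L hL θ d t).sub h2
  have heq := integral_eq_sub_of_hasDerivAt hderiv (hcont.intervalIntegrable 0 1)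
  have heq2 : ∫ t in (0:ℝ)..1,
      (fderiv ℝ (gradient L) (θ + t • d) d - fderiv ℝ (gradient L) θ d)
      = gradient L (θ + d) - gradient L θ - fderiv ℝ (gradient L) θ d := by
    rw [heq]; simp; abel
  rw [← heq2]
  have hnorm : ‖∫ t in (0:ℝ)..1,
      (fderiv ℝ (gradient L) (θ + t • d) d - fderiv ℝ (gradient L) θ d)‖
      ≤ |∫ t in (0:ℝ)..1, β₃ * t * ‖d‖ ^ 2| := by
    apply intervalIntegral.norm_integral_le_abs_of_norm_le _
      (by apply Continuous.intervalIntegrable; continuity)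
    apply MeasureTheory.ae_restrict_of_forall_mem measurableSet_Ioc
    intro t ht
    norm_num at ht
    calc ‖fderiv ℝ (gradient L) (θ + t • d) d - fderiv ℝ (gradient L) θ d‖
        = ‖(fderiv ℝ (gradient L) (θ + t • d) - fderiv ℝ (gradient L) θ) d‖ := by simp
      _ ≤ ‖fderiv ℝ (gradient L) (θ + t • d) - fderiv ℝ (gradient L) θ‖ * ‖d‖ :=
          ContinuousLinearMap.le_opNorm _ _
      _ ≤ (β₃ * ‖(θ + t • d) - θ‖) * ‖d‖ := by gcongr; exact hHessLip _ _
      _ = β₃ * t * ‖d‖ ^ 2 := by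
          simp [norm_smul, abs_of_nonneg (le_of_lt ht.1)]; ring
  have hval : ∫ t in (0:ℝ)..1, β₃ * t * ‖d‖ ^ 2 = β₃ / 2 * ‖d‖ ^ 2 := by
    have : ∫ t in (0:ℝ)..1, β₃ * t * ‖d‖ ^ 2 = β₃ * ‖d‖ ^ 2 * ∫ t in (0:ℝ)..1, t := by
      rw [← intervalIntegral.integral_const_mul]; congr 1; ext t; ring
    rw [this, integral_id]; ring
  rw [hval] at hnorm
  calc ‖_‖ ≤ _ := hnorm
    _ ≤ β₃ / 2 * ‖d‖ ^ 2 := by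
        rw [abs_of_nonneg (by positivity)]

lemma aux_symm (L : F → ℝ) (hL : ContDiff ℝ 2 L) (θ u w : F) :
    ⟪fderiv ℝ (gradient L) θ u, w⟫_ℝ = ⟪fderiv ℝ (gradient L) θ w, u⟫_ℝ := by
  have hdL : ContDiff ℝ 1 (fderiv ℝ L) := hL.fderiv_right (by norm_num)
  have hgrad : gradient L = (toDual ℝ F).symm ∘ (fderiv ℝ L) := rfl
  have hH : ∀ a : F, fderiv ℝ (gradient L) θ a =
      (toDual ℝ F).symm (fderiv ℝ (fderiv ℝ L) θ a) := by
    intro a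
    rw [hgrad, LinearIsometryEquiv.comp_fderiv]; rfl
  have hsymm : ∀ a b : F, fderiv ℝ (fderiv ℝ L) θ a b = fderiv ℝ (fderiv ℝ L) θ b a := by
    intro a b
    exact second_derivative_symmetric
      (fun y => (hL.differentiable (by norm_num) y).hasFDerivAt)
      ((hdL.differentiable one_ne_zero θ).hasFDerivAt) a b
  rw [hH u, hH w, toDual_symm_apply, toDual_symm_apply]
  exact hsymm u w

end Aux

/-- one-step SAM loss estimate: If `L` is `β`-smooth (`‖∇²L‖ ≤ β`),
`μ`-PL with `min L = 0`, the Hessian is `β₃`-Lipschitz, `‖v‖ = 1` and `η ≤ 1/(4β)`,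
then for `θ⁺ = θ − η ∇L(θ + ρ v)`:
`L(θ⁺) ≤ L(θ) − (3η/4)‖∇L(θ)‖² + ηρ‖∇²L(θ)∇L(θ)‖ + (ηρ²β₃/2)‖∇L(θ)‖
            + η²β(‖∇L(θ)‖² + ρ²β²)`. -/
theorem sam_one_step_loss_bound
    {p : ℕ} (L : EuclideanSpace ℝ (Fin p) → ℝ)
    (hL : ContDiff ℝ 2 L)
    (μ β β₃ : ℝ) (hμ : 0 < μ) (hβ : 0 < β) (hβ₃ : 0 < β₃)
    (hnonneg : ∀ x, 0 ≤ L x)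
    (hPL : ∀ x, ‖gradient L x‖ ^ 2 ≥ 2 * μ * L x)
    (hHess : ∀ x, ‖fderiv ℝ (gradient L) x‖ ≤ β)
    (hHessLip : ∀ x y, ‖fderiv ℝ (gradient L) x - fderiv ℝ (gradient L) y‖ ≤ β₃ * ‖x - y‖)
    (η ρ : ℝ) (hη : 0 < η) (hηβ : η ≤ 1 / (4 * β)) (hρ : 0 < ρ)
    (θ v : EuclideanSpace ℝ (Fin p)) (hv : ‖v‖ = 1) :
    L (θ - η • gradient L (θ + ρ • v))
      ≤ L θ - 3 * η / 4 * ‖gradient L θ‖ ^ 2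
          + η * ρ * ‖fderiv ℝ (gradient L) θ (gradient L θ)‖
          + η * ρ ^ 2 * β₃ / 2 * ‖gradient L θ‖
          + η ^ 2 * β * (‖gradient L θ‖ ^ 2 + ρ ^ 2 * β ^ 2) := by
  set gθ := gradient L θ with hgθ
  set gp := gradient L (θ + ρ • v) with hgp
  set Hθ := fderiv ℝ (gradient L) θ with hHθ
  have hd : θ - η • gp = θ + (-(η • gp)) := by rw [sub_eq_add_neg]
  have h1 : L (θ + (-(η • gp))) ≤ L θ + ⟪gθ, -(η • gp)⟫_ℝ + β / 2 * ‖-(η • gp)‖ ^ 2 :=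
    aux_descent L hL β hβ hHess θ _
  have hinner : ⟪gθ, -(η • gp)⟫_ℝ = -(η * ⟪gθ, gp⟫_ℝ) := by
    rw [inner_neg_right, real_inner_smul_right]
  have hnorm : ‖-(η • gp)‖ ^ 2 = η ^ 2 * ‖gp‖ ^ 2 := by
    rw [norm_neg, norm_smul, Real.norm_eq_abs, abs_of_pos hη, mul_pow]
  -- Taylor remainder
  have hρv : ‖ρ • v‖ = ρ := by
    rw [norm_smul, Real.norm_eq_abs, abs_of_pos hρ, hv, mul_one]
  have h2 : ‖gp - gθ - Hθ (ρ • v)‖ ≤ β₃ / 2 * ρ ^ 2 := by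
    have := aux_taylor L hL β₃ hβ₃ hHessLip θ (ρ • v)
    rwa [hρv] at this
  -- Lipschitz bound
  have h3 : ‖gp - gθ‖ ≤ β * ρ := by
    have := aux_lip L hL β hHess (θ + ρ • v) θ
    rwa [add_sub_cancel_left, hρv] at this
  -- inner product expansion
  set r := gp - gθ - Hθ (ρ • v) with hr
  have hsplit : ⟪gθ, gp⟫_ℝ = ‖gθ‖ ^ 2 + ρ * ⟪Hθ gθ, v⟫_ℝ + ⟪gθ, r⟫_ℝ := by
    have hgpeq : gp = gθ + Hθ (ρ • v) + r := by rw [hr]; abel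
    rw [hgpeq, inner_add_right, inner_add_right, real_inner_self_eq_norm_sq,
      map_smul, real_inner_smul_right, aux_symm L hL θ gθ v]
    rw [real_inner_comm]
  have hb1 : |⟪Hθ gθ, v⟫_ℝ| ≤ ‖Hθ gθ‖ := by
    calc |⟪Hθ gθ, v⟫_ℝ| ≤ ‖Hθ gθ‖ * ‖v‖ := abs_real_inner_le_norm _ _
      _ = ‖Hθ gθ‖ := by rw [hv, mul_one]
  have hb2 : |⟪gθ, r⟫_ℝ| ≤ ‖gθ‖ * (β₃ / 2 * ρ ^ 2) := by
    calc |⟪gθ, r⟫_ℝ| ≤ ‖gθ‖ * ‖r‖ := abs_real_inner_le_norm _ _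
      _ ≤ ‖gθ‖ * (β₃ / 2 * ρ ^ 2) := by gcongr
  have hb3 : ‖gp‖ ≤ ‖gθ‖ + β * ρ := by
    have := norm_sub_norm_le gp gθ
    linarith [h3, this]
  have key1 : -(η * ⟪gθ, gp⟫_ℝ)
      ≤ -(η * ‖gθ‖ ^ 2) + η * ρ * ‖Hθ gθ‖ + η * ρ ^ 2 * β₃ / 2 * ‖gθ‖ := by
    have h4 : ⟪gθ, gp⟫_ℝ ≥ ‖gθ‖ ^ 2 - ρ * ‖Hθ gθ‖ - ‖gθ‖ * (β₃ / 2 * ρ ^ 2) := by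
      have e1 := neg_abs_le (⟪Hθ gθ, v⟫_ℝ)
      have e2 := neg_abs_le (⟪gθ, r⟫_ℝ)
      nlinarith [hb1, hb2, hρ.le]
    nlinarith [hη.le]
  have key2 : β / 2 * (η ^ 2 * ‖gp‖ ^ 2) ≤ η ^ 2 * β * (‖gθ‖ ^ 2 + ρ ^ 2 * β ^ 2) := by
    have hsq : ‖gp‖ ^ 2 ≤ (‖gθ‖ + β * ρ) ^ 2 := by
      have := mul_le_mul hb3 hb3 (norm_nonneg gp) (by positivity)
      nlinarith [this]
    have h5 : ‖gp‖ ^ 2 ≤ 2 * ‖gθ‖ ^ 2 + 2 * β ^ 2 * ρ ^ 2 := by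
      nlinarith [sq_nonneg (‖gθ‖ - β * ρ)]
    have h6 := mul_le_mul_of_nonneg_left h5 (show (0:ℝ) ≤ β / 2 * η ^ 2 by positivity)
    nlinarith [h6]
  have hquart : 0 ≤ η / 4 * ‖gθ‖ ^ 2 := by positivity
  rw [hd]
  rw [hinner, hnorm] at h1
  linarith [h1, key1, key2, hquart]
end
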